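/- Let θ : ℝ → ℝ satisfy θ'(s) = −θ(s)·sin θ(s) for all s ∈ ℝ, with θ(0) = θ₀ ∈ (0, π). Then θ is strictly decreasing, θ(s) → 0 as s → +∞, and s·θ(s) → 1 as s → +∞. -/

import Mathlib

open Real Filter Topology

theorem stmt13 (θ₀ : ℝ) (hθ₀ : θ₀ ∈ Set.Ioo 0 π) (θ : ℝ → ℝ)
    (hθ0 : θ 0 = θ₀)
    (hθ : ∀ s : ℝ, HasDerivAt θ (-(θ s) * Real.sin (θ s)) s) :
    StrictAnti θ ∧
    Tendsto θ atTop (𝓝 0) ∧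
    Tendsto (fun s => s * θ s) atTop (𝓝 1) := by
  obtain ⟨hθ₀0, hθ₀π⟩ := hθ₀
  have hcont : Continuous θ := by
    rw [continuous_iff_continuousAt]; exact fun s => (hθ s).continuousAt
  -- Step 1: θ never takes the values 0 or π (equilibria), by ODE uniqueness.
  have hne : ∀ c : ℝ, c = 0 ∨ c = π → ∀ t₁ : ℝ, θ t₁ ≠ c := by
    intro c hc t₁ ht₁
    have hsc : Real.sin c = 0 := by rcases hc with rfl | rfl <;> simp
    have hc0 : 0 ≤ c := by
      rcases hc with rfl | rfl
      · exact le_refl 0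
      · exact pi_pos.le
    have hcπ : c ≤ π := by
      rcases hc with rfl | rfl
      · exact pi_pos.le
      · exact le_refl π
    set a : ℝ := min t₁ 0 - 1 with ha
    set b : ℝ := max t₁ 0 + 1 with hb
    have hab1 : a < t₁ := by
      have := min_le_left t₁ 0; simp only [ha]; linarith
    have hab2 : t₁ < b := by
      have := le_max_left t₁ 0; simp only [hb]; linarith
    have h0ab : (0:ℝ) ∈ Set.Icc a b := by
      constructor
      · have := min_le_right t₁ 0; simp only [ha]; linarith
      · have := le_max_right t₁ 0; simp only [hb]; linarith
    obtain ⟨C, hC⟩ := (isCompact_Icc (a := a) (b := b)).exists_bound_of_continuousOn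
      hcont.continuousOn
    set M : ℝ := max C π with hM
    have hM0 : 0 ≤ M := pi_pos.le.trans (le_max_right _ _)
    have hlip : ∀ t : ℝ, LipschitzOnWith (1 + M).toNNReal (fun x => -x * Real.sin x)
        (Set.Icc (-M) M) := by
      intro t
      apply (convex_Icc _ _).lipschitzOnWith_of_nnnorm_hasDerivWithin_le
        (f' := fun x => -1 * Real.sin x + -x * Real.cos x)
      · intro x hx
        exact ((hasDerivAt_neg x).mul (Real.hasDerivAt_sin x)).hasDerivWithinAt
      · intro x hx
        rw [← NNReal.coe_le_coe, coe_nnnorm, Real.coe_toNNReal _ (by positivity)]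
        have h1 : |Real.sin x| ≤ 1 := Real.abs_sin_le_one x
        have h2 : |x| ≤ M := abs_le.mpr ⟨hx.1, hx.2⟩
        have h3 : |Real.cos x| ≤ 1 := Real.abs_cos_le_one x
        have h4 : ‖-1 * Real.sin x + -x * Real.cos x‖ ≤ |(-1) * Real.sin x| + |(-x) * Real.cos x| :=
          abs_add_le _ _
        rw [abs_mul, abs_mul, abs_neg, abs_neg, abs_one, one_mul] at h4
        have h5 : |x| * |Real.cos x| ≤ M := by nlinarith [abs_nonneg x, abs_nonneg (Real.cos x)]
        calc ‖-1 * Real.sin x + -x * Real.cos x‖ ≤ |Real.sin x| + |x| * |Real.cos x| := h4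
          _ ≤ 1 + M := by linarith
    have key : Set.EqOn θ (fun _ => c) (Set.Icc a b) := by
      apply ODE_solution_unique_of_mem_Icc (v := fun _ x => -x * Real.sin x)
        (s := fun _ => Set.Icc (-M) M) (fun t _ => hlip t) ⟨hab1, hab2⟩ hcont.continuousOn
        (fun t _ => hθ t)
        (fun t ht => ?_) continuousOn_const
        (fun t _ => by simpa [hsc] using hasDerivAt_const t c)
        (fun t _ => ⟨by linarith, le_trans hcπ (le_max_right _ _)⟩) ht₁
      · have htmem : t ∈ Set.Icc a b := ⟨ht.1.le, ht.2.le⟩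
        have := hC t htmem
        rw [Real.norm_eq_abs] at this
        have hCM : C ≤ M := le_max_left _ _
        exact abs_le.mp (this.trans hCM)
    have h0 : θ 0 = c := key h0ab
    rw [hθ0] at h0
    rcases hc with rfl | rfl
    · exact absurd h0 (ne_of_gt hθ₀0)
    · exact absurd h0 (ne_of_lt hθ₀π)
  -- Step 2: invariance  θ t ∈ (0, π)
  have hmem : ∀ t : ℝ, θ t ∈ Set.Ioo 0 π := by
    intro t
    by_contra hmemt
    rw [Set.mem_Ioo, not_and_or, not_lt, not_lt] at hmemt
    rcases hmemt with h | h
    · have h0mem : (0:ℝ) ∈ Set.uIcc (θ t) (θ 0) :=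
        Set.mem_uIcc.mpr (Or.inl ⟨h, by rw [hθ0]; exact hθ₀0.le⟩)
      obtain ⟨t₁, -, ht₁⟩ := intermediate_value_uIcc hcont.continuousOn h0mem
      exact hne 0 (Or.inl rfl) t₁ ht₁
    · have hπmem : π ∈ Set.uIcc (θ t) (θ 0) :=
        Set.mem_uIcc.mpr (Or.inr ⟨by rw [hθ0]; exact hθ₀π.le, h⟩)
      obtain ⟨t₁, -, ht₁⟩ := intermediate_value_uIcc hcont.continuousOn hπmem
      exact hne π (Or.inr rfl) t₁ ht₁
  -- Part 1: strict antitonicity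
  have h1 : StrictAnti θ := by
    apply strictAnti_of_deriv_neg
    intro s
    rw [(hθ s).deriv]
    have hs := hmem s
    have hsin := Real.sin_pos_of_pos_of_lt_pi hs.1 hs.2
    nlinarith [hs.1]
  -- Part 2: convergence to 0
  have hbdd : BddBelow (Set.range θ) := ⟨0, by rintro x ⟨s, rfl⟩; exact (hmem s).1.le⟩
  have h2' : Tendsto θ atTop (𝓝 (⨅ s, θ s)) := tendsto_atTop_ciInf h1.antitone hbdd
  set L := ⨅ s, θ s with hLdef
  have hL0 : 0 ≤ L := le_ciInf fun s => (hmem s).1.le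
  have hLle : ∀ s, L ≤ θ s := fun s => ciInf_le hbdd s
  have hLeq : L = 0 := by
    by_contra hLne
    have hLpos : 0 < L := lt_of_le_of_ne hL0 (Ne.symm hLne)
    have hLθ0 : L ≤ θ 0 := hLle 0
    obtain ⟨x0, hx0, hminon⟩ := isCompact_Icc.exists_isMinOn (Set.nonempty_Icc.mpr hLθ0)
      Real.continuous_sin.continuousOn
    set m := Real.sin x0 with hmdef
    have hm : 0 < m := Real.sin_pos_of_pos_of_lt_pi (lt_of_lt_of_le hLpos hx0.1)
      (lt_of_le_of_lt hx0.2 (hmem 0).2)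
    have gderiv : ∀ s : ℝ, HasDerivAt (fun y => θ y + y * (L * m))
        (-(θ s) * Real.sin (θ s) + L * m) s :=
      fun s => (hθ s).add (hasDerivAt_mul_const (L * m))
    have hanti : AntitoneOn (fun y => θ y + y * (L * m)) (Set.Ici 0) := by
      apply antitoneOn_of_deriv_nonpos (convex_Ici 0)
        (Continuous.continuousOn (by continuity))
        (fun x _ => (gderiv x).differentiableAt.differentiableWithinAt)
      intro x hx
      rw [interior_Ici] at hx
      rw [(gderiv x).deriv]
      have hθx1 : L ≤ θ x := hLle x
      have hθx2 : θ x ≤ θ 0 := h1.antitone hx.le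
      have hsinx : m ≤ Real.sin (θ x) := hminon ⟨hθx1, hθx2⟩
      nlinarith
    set s₀ : ℝ := (θ 0) / (L * m) + 1 with hs₀def
    have hs₀pos : 0 < s₀ :=
      add_pos_of_nonneg_of_pos (div_nonneg (hmem 0).1.le (mul_pos hLpos hm).le) one_pos
    have hle := hanti (Set.self_mem_Ici) (Set.mem_Ici.mpr hs₀pos.le) hs₀pos.le
    simp only [zero_mul, add_zero] at hle
    have hs₀mul : s₀ * (L * m) = θ 0 + L * m := by
      rw [hs₀def, add_mul, div_mul_cancel₀ _ (mul_pos hLpos hm).ne', one_mul]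
    have := (hmem s₀).1
    nlinarith
  have h2 : Tendsto θ atTop (𝓝 0) := hLeq ▸ h2'
  -- Part 3
  have hφ : ∀ s : ℝ, HasDerivAt (fun t => (θ t)⁻¹) (Real.sin (θ s) / θ s) s := by
    intro s
    have hne0 : θ s ≠ 0 := ne_of_gt (hmem s).1
    have h := (hθ s).inv hne0
    refine h.congr_deriv ?_
    rw [div_eq_div_iff (pow_ne_zero 2 hne0) hne0]
    ring
  have hφcont : Continuous fun t => (θ t)⁻¹ := by
    rw [continuous_iff_continuousAt]; exact fun s => (hφ s).continuousAt
  have hmain : Tendsto (fun s => (θ s)⁻¹ / s) atTop (𝓝 1) := by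
    rw [Metric.tendsto_atTop]
    intro ε hε
    set δ : ℝ := min 1 (Real.sqrt ε) with hδdef
    have hδ0 : 0 < δ := lt_min one_pos (Real.sqrt_pos.mpr hε)
    have hδ1 : δ ≤ 1 := min_le_left _ _
    have hδ2 : δ ^ 2 ≤ ε := by
      have h := min_le_right 1 (Real.sqrt ε)
      nlinarith [Real.sq_sqrt hε.le, Real.sqrt_nonneg ε]
    obtain ⟨T, hT⟩ := eventually_atTop.mp (h2.eventually_lt_const hδ0)
    have hub : ∀ s, T ≤ s → Real.sin (θ s) / θ s ≤ 1 := by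
      intro s hs
      rw [div_le_one (hmem s).1]
      exact Real.sin_le (hmem s).1.le
    have hlb : ∀ s, T ≤ s → 1 - ε / 4 ≤ Real.sin (θ s) / θ s := by
      intro s hs
      have hx0 : 0 < θ s := (hmem s).1
      have hxδ : θ s < δ := hT s hs
      have hx1 : θ s ≤ 1 := hxδ.le.trans hδ1
      have hcube := Real.sin_gt_sub_cube hx0
      rw [le_div_iff₀ hx0]
      have hxsq : θ s ^ 2 ≤ ε := by nlinarith
      have h3 : θ s ^ 3 ≤ θ s * ε := by nlinarith
      nlinarith
    -- monotonicity juice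
    have g1mono : MonotoneOn (fun s => s - (θ s)⁻¹) (Set.Ici T) := by
      apply monotoneOn_of_deriv_nonneg (convex_Ici T)
        (Continuous.continuousOn (continuous_id.sub hφcont))
        (fun x _ => ((hasDerivAt_id x).sub (hφ x)).differentiableAt.differentiableWithinAt)
      intro x hx
      rw [interior_Ici] at hx
      rw [((hasDerivAt_id x).sub (hφ x)).deriv]
      have := hub x hx.le
      linarith
    have g2mono : MonotoneOn (fun s => (θ s)⁻¹ - (1 - ε / 4) * s) (Set.Ici T) := by
      apply monotoneOn_of_deriv_nonneg (convex_Ici T)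
        (Continuous.continuousOn (hφcont.sub (continuous_const.mul continuous_id)))
        (fun x _ => ((hφ x).sub ((hasDerivAt_id x).const_mul
          (1 - ε / 4))).differentiableAt.differentiableWithinAt)
      intro x hx
      rw [interior_Ici] at hx
      erw [((hφ x).sub ((hasDerivAt_id x).const_mul (1 - ε / 4))).deriv]
      have := hlb x hx.le
      simp only [mul_one]
      linarith
    set A : ℝ := (θ T)⁻¹ - T with hAdef
    set B : ℝ := (1 - ε / 4) * T - (θ T)⁻¹ with hBdef
    clear_value A B
    refine ⟨max (max T 1) (2 * (|A| + |B|) / ε + 1), fun s hs => ?_⟩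
    have hsT : T ≤ s := le_trans ((le_max_left T 1).trans (le_max_left _ _)) hs
    have hs1 : (1:ℝ) ≤ s := le_trans ((le_max_right T 1).trans (le_max_left _ _)) hs
    have hs0 : (0:ℝ) < s := lt_of_lt_of_le one_pos hs1
    have hsε : 2 * (|A| + |B|) / ε + 1 ≤ s := le_trans (le_max_right _ _) hs
    have hεs : 2 * (|A| + |B|) ≤ ε * (s - 1) := by
      rw [div_add' _ _ _ (ne_of_gt hε), div_le_iff₀ hε] at hsε
      nlinarith
    have hg1 := g1mono Set.self_mem_Ici (Set.mem_Ici.mpr hsT) hsT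
    have hg2 := g2mono Set.self_mem_Ici (Set.mem_Ici.mpr hsT) hsT
    simp only at hg1 hg2
    -- hg1 : T - (θ T)⁻¹ ≤ s - (θ s)⁻¹,  hg2 : (θ T)⁻¹ - (1-ε/4)T ≤ (θ s)⁻¹ - (1-ε/4)s
    have hεspos : 0 < ε * s := mul_pos hε hs0
    have hBbound : B ≤ (ε * s - ε) / 2 := by
      have h1 := le_abs_self B
      have h2 := abs_nonneg A
      have h3 : ε * (s - 1) = ε * s - ε := by ring
      linarith [hεs]
    have hAbound : A ≤ (ε * s - ε) / 2 := by
      have h1 := le_abs_self A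
      have h2 := abs_nonneg B
      have h3 : ε * (s - 1) = ε * s - ε := by ring
      linarith [hεs]
    have habs : |(θ s)⁻¹ - s| < ε * s := by
      rw [abs_lt]
      constructor
      · linarith [hg2, hBbound, hεspos, hε]
      · linarith [hg1, hAbound, hεspos, hε]
    rw [Real.dist_eq]
    have heq : (θ s)⁻¹ / s - 1 = ((θ s)⁻¹ - s) / s := by rw [sub_div, div_self (ne_of_gt hs0)]
    rw [heq, abs_div, abs_of_pos hs0, div_lt_iff₀ hs0]
    linarith [habs]
  refine ⟨h1, h2, ?_⟩
  have hinv := hmain.inv₀ one_ne_zero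
  rw [inv_one] at hinv
  apply hinv.congr'
  filter_upwards [eventually_ge_atTop (1:ℝ)] with s hs
  rw [inv_div, div_eq_mul_inv, inv_inv]
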